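/- Fix d ≥ 2 and write n = a(d−1) + b with 0 ≤ b < d−1. Consider the multiset of moduli consisting of d−1 copies of each of d, d², …, d^a together with b copies of d^{a+1}. Then the maximum, over all choices of shifts, of the number of consecutive integers fully covered by the union of the corresponding residue classes equals d^a(1 + b) − 1. -/

import Mathlib

private lemma count_le_one (c sv m L : ℤ) (h : L ≤ c) :
    ((Finset.Ico m (m + L)).filter (fun x => c ∣ x - sv)).card ≤ 1 := by
  apply Finset.card_le_one.mpr
  intro x hx y hy
  simp only [Finset.mem_filter, Finset.mem_Ico] at hx hy
  have hdvd : c ∣ x - y := by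
    have := dvd_sub hx.2 hy.2
    simpa using this
  have := Int.eq_zero_of_abs_lt_dvd hdvd (by
    rw [abs_lt]; constructor <;> omega)
  omega

private lemma count_exact (c : ℤ) (hc : 0 < c) (sv : ℤ) (t : ℕ) : ∀ m : ℤ,
    ((Finset.Ico m (m + c * t)).filter (fun x => c ∣ x - sv)).card = t := by
  induction t with
  | zero => intro m; simp
  | succ t ih =>
    intro m
    have hsplit : Finset.Ico m (m + c * (t + 1 : ℕ)) =
        Finset.Ico m (m + c) ∪ Finset.Ico (m + c) (m + c + c * t) := by
      rw [Finset.Ico_union_Ico_eq_Ico (by omega) (by nlinarith [Int.natCast_nonneg t])]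
      congr 1; push_cast; ring
    have hdisj : Disjoint (Finset.Ico m (m + c)) (Finset.Ico (m + c) (m + c + c * t)) :=
      Finset.Ico_disjoint_Ico_consecutive _ _ _
    rw [hsplit, Finset.filter_union, Finset.card_union_of_disjoint
      (Finset.disjoint_filter_filter hdisj)]
    have h1 : ((Finset.Ico m (m + c)).filter (fun x => c ∣ x - sv)).card = 1 := by
      rw [Finset.card_eq_one]
      refine ⟨m + (sv - m) % c, ?_⟩
      ext x
      simp only [Finset.mem_filter, Finset.mem_Ico, Finset.mem_singleton]
      constructor
      · rintro ⟨⟨h1, h2⟩, hd⟩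
        have hd0 : c ∣ (m + (sv - m) % c) - sv := by
          have := Int.emod_def (sv - m) c
          exact ⟨-((sv - m) / c), by linarith [this]⟩
        have hdd : c ∣ x - (m + (sv - m) % c) := by
          have := dvd_sub hd hd0
          simpa using this
        have hm1 : 0 ≤ (sv - m) % c := Int.emod_nonneg _ (by omega)
        have hm2 : (sv - m) % c < c := Int.emod_lt_of_pos _ hc
        have := Int.eq_zero_of_abs_lt_dvd hdd (by rw [abs_lt]; constructor <;> omega)
        omega
      · rintro rfl
        have hm1 : 0 ≤ (sv - m) % c := Int.emod_nonneg _ (by omega)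
        have hm2 : (sv - m) % c < c := Int.emod_lt_of_pos _ hc
        refine ⟨⟨by omega, by omega⟩, ?_⟩
        have := Int.emod_def (sv - m) c
        exact ⟨-((sv - m) / c), by linarith [this]⟩
    have h2 := ih (m + c)
    rw [h1]
    have : m + c + c * t = (m + c) + c * t := by ring
    rw [this, h2]
    omega

private lemma geom_nat (d : ℕ) (hd : 1 ≤ d) : ∀ a : ℕ,
    (∑ k ∈ Finset.range a, d ^ k) * (d - 1) = d ^ a - 1 := by
  intro a
  induction a with
  | zero => simp
  | succ a ih =>
    rw [Finset.sum_range_succ, add_mul, ih, pow_succ]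
    have h1 : 1 ≤ d ^ a := Nat.one_le_pow _ _ (by omega)
    have h2 : d ^ a ≤ d ^ a * d := Nat.le_mul_of_pos_right _ (by omega)
    have h3 : d ^ a * (d - 1) = d ^ a * d - d ^ a := Nat.mul_sub (d^a) d 1 ▸ by omega
    omega

/-- Exact maximal covered run for the regulated degree filling with `d-1` copies
of `d,…,dᵃ` and `b` copies of `dᵃ⁺¹`: the maximum over shifts of the length of a
fully covered run of consecutive integers equals `dᵃ(1+b) - 1`. -/
theorem degree_filling_max_run
    (d a b : ℕ) (hd : 2 ≤ d) (hb : b < d - 1)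
    (M : (Fin a × Fin (d - 1)) ⊕ Fin b → ℕ)
    (hM1 : ∀ k j, M (Sum.inl (k, j)) = d ^ ((k : ℕ) + 1))
    (hM2 : ∀ j, M (Sum.inr j) = d ^ (a + 1)) :
    IsGreatest {ℓ : ℕ | ∃ (s : (Fin a × Fin (d - 1)) ⊕ Fin b → ℤ) (m : ℤ),
        ∀ x ∈ Set.Ico m (m + (ℓ : ℤ)), ∃ i, (M i : ℤ) ∣ x - s i}
      (d ^ a * (1 + b) - 1) := by
  have hda : (1:ℕ) ≤ d ^ a := Nat.one_le_pow _ _ (by omega)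
  constructor
  · -- membership
    refine ⟨Sum.elim (fun p => (((p.2 : ℕ) + 1) * d ^ (p.1 : ℕ) : ℤ))
        (fun j => (((j : ℕ) + 1) * d ^ a : ℤ)), 1, ?_⟩
    intro x hx
    obtain ⟨hx1, hx2⟩ := hx
    have hℓ : ((d ^ a * (1 + b) - 1 : ℕ) : ℤ) = (d:ℤ) ^ a * (1 + b) - 1 := by
      have h1 : 1 ≤ d ^ a * (1 + b) := Nat.mul_pos hda (by omega)
      push_cast [h1]; ring
    have hx2' : x < (d:ℤ) ^ a * (1 + b) := by rw [hℓ] at hx2; omega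
    set n := x.toNat with hn
    have hxn : x = (n : ℤ) := (Int.toNat_of_nonneg (by omega)).symm
    have hn1 : 1 ≤ n := by omega
    have hn2 : n < d ^ a * (1 + b) := by
      have : (n : ℤ) < ((d ^ a * (1 + b) : ℕ) : ℤ) := by push_cast; omega
      exact_mod_cast this
    set k := Nat.findGreatest (fun k => d ^ k ∣ n) a with hk
    have hdk : d ^ k ∣ n :=
      Nat.findGreatest_spec (P := fun m => d ^ m ∣ n) (Nat.zero_le a) (by simp)
    by_cases hka : k = a
    · -- divisible by d^a
      obtain ⟨v, hv⟩ := hka ▸ hdk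
      have hv1 : 1 ≤ v := by
        rcases Nat.eq_zero_or_pos v with h | h
        · subst h; simp at hv; omega
        · exact h
      have hv2 : v < 1 + b := by
        by_contra h
        push_neg at h
        have : d ^ a * (1 + b) ≤ d ^ a * v := Nat.mul_le_mul_left _ h
        omega
      refine ⟨Sum.inr ⟨v - 1, by omega⟩, ?_⟩
      rw [hM2]
      have : x - ((((v - 1 : ℕ) : ℕ) + 1) * d ^ a : ℤ) = 0 := by
        rw [hxn, hv]
        have : ((v - 1 : ℕ) : ℤ) = (v : ℤ) - 1 := by omega
        push_cast [this]; ring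
      simp only [Sum.elim_inr]
      rw [this]
      exact dvd_zero _
    · have hklt : k < a := lt_of_le_of_ne (Nat.findGreatest_le a) hka
      have hnd : ¬ d ^ (k + 1) ∣ n :=
        Nat.findGreatest_is_greatest (P := fun m => d ^ m ∣ n) (n := a)
          (Nat.lt_succ_self k) (by omega)
      obtain ⟨u, hu⟩ := hdk
      have hdu : ¬ d ∣ u := by
        rintro ⟨w, hw⟩
        exact hnd ⟨w, by rw [hu, hw, pow_succ]; ring⟩
      set r := u % d with hr
      have hr1 : 1 ≤ r := by
        rcases Nat.eq_zero_or_pos r with h | h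
        · exact absurd (Nat.dvd_of_mod_eq_zero h) hdu
        · exact h
      have hr2 : r < d := Nat.mod_lt _ (by omega)
      refine ⟨Sum.inl (⟨k, hklt⟩, ⟨r - 1, by omega⟩), ?_⟩
      rw [hM1]
      simp only [Sum.elim_inl]
      have hcast : ((r - 1 : ℕ) : ℤ) = (r : ℤ) - 1 := by omega
      have hstep : x - (((r - 1 : ℕ) : ℤ) + 1) * (d:ℤ) ^ k = (d:ℤ) ^ k * ((u:ℤ) - r) := by
        rw [hxn, hu, hcast]; push_cast; ring
      rw [hstep]
      have hru : r ≤ u := Nat.mod_le u d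
      have hdvd : (d:ℤ) ∣ (u:ℤ) - r := by
        have h := Nat.dvd_sub_mod (n := d) u
        have h2 : ((u - r : ℕ) : ℤ) = (u:ℤ) - r := by omega
        rw [← h2]; exact_mod_cast h
      push_cast
      rw [pow_succ]
      exact mul_dvd_mul_left _ hdvd
  · -- upper bound
    intro ℓ hℓ
    obtain ⟨s, m, hcov⟩ := hℓ
    by_contra hlt
    push_neg at hlt
    set L := d ^ a * (1 + b) with hL
    have hL1 : 1 ≤ L := Nat.mul_pos hda (by omega)
    have hLℓ : L ≤ ℓ := by omega
    classical
    set T := Finset.Ico m (m + (L : ℤ)) with hT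
    have hTcard : T.card = L := by rw [hT, Int.card_Ico]; simp
    have hsub : T ⊆ Finset.univ.biUnion
        (fun i => T.filter (fun x => (M i : ℤ) ∣ x - s i)) := by
      intro x hx
      have hx' : x ∈ Set.Ico m (m + (ℓ : ℤ)) := by
        rw [hT, Finset.mem_Ico] at hx
        have : (L : ℤ) ≤ (ℓ : ℤ) := by exact_mod_cast hLℓ
        exact ⟨hx.1, by omega⟩
      obtain ⟨i, hi⟩ := hcov x hx'
      exact Finset.mem_biUnion.mpr ⟨i, Finset.mem_univ _, Finset.mem_filter.mpr ⟨hx, hi⟩⟩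
    have hsum : L ≤ ∑ i, (T.filter (fun x => (M i : ℤ) ∣ x - s i)).card := by
      calc L = T.card := hTcard.symm
        _ ≤ _ := (Finset.card_le_card hsub).trans Finset.card_biUnion_le
    rw [Fintype.sum_sum_type] at hsum
    have hinr : ∑ j : Fin b,
        (T.filter (fun x => (M (Sum.inr j) : ℤ) ∣ x - s (Sum.inr j))).card ≤ b := by
      calc ∑ j : Fin b, (T.filter (fun x => (M (Sum.inr j) : ℤ) ∣ x - s (Sum.inr j))).card
          ≤ ∑ _j : Fin b, 1 := by
            refine Finset.sum_le_sum fun j _ => ?_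
            rw [hM2, hT]
            refine count_le_one _ _ _ _ ?_
            have h1 : L ≤ d ^ (a + 1) := by
              rw [hL, pow_succ]
              exact Nat.mul_le_mul_left _ (by omega)
            exact_mod_cast h1
        _ = b := by simp
    have hinl : ∀ p : Fin a × Fin (d - 1),
        (T.filter (fun x => (M (Sum.inl p) : ℤ) ∣ x - s (Sum.inl p))).card
          = d ^ (a - 1 - (p.1 : ℕ)) * (1 + b) := by
      rintro ⟨k, j⟩
      rw [hM1 k j, hT]
      have hprod : (L : ℤ) = ((d ^ ((k : ℕ) + 1) : ℕ) : ℤ) *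
          ((d ^ (a - 1 - (k : ℕ)) * (1 + b) : ℕ) : ℤ) := by
        have hkl := k.isLt
        have h1 : d ^ ((k : ℕ) + 1) * (d ^ (a - 1 - (k : ℕ)) * (1 + b)) = L := by
          rw [hL, ← mul_assoc, ← pow_add]
          congr 2
          omega
        calc (L : ℤ) = ((d ^ ((k : ℕ) + 1) * (d ^ (a - 1 - (k : ℕ)) * (1 + b)) : ℕ) : ℤ) := by
              rw [h1]
          _ = _ := by push_cast; ring
      rw [hprod]
      exact count_exact _ (show (0:ℤ) < ((d ^ ((k : ℕ) + 1) : ℕ) : ℤ) from by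
        exact_mod_cast Nat.pow_pos (by omega)) _ _ m
    have hsuminl : ∑ p : Fin a × Fin (d - 1),
        (T.filter (fun x => (M (Sum.inl p) : ℤ) ∣ x - s (Sum.inl p))).card
          = (1 + b) * (d ^ a - 1) := by
      rw [Finset.sum_congr rfl (fun p _ => hinl p), Fintype.sum_prod_type]
      have hstep : ∀ k : Fin a, ∑ _j : Fin (d - 1), d ^ (a - 1 - (k : ℕ)) * (1 + b)
          = (d ^ (a - 1 - (k : ℕ)) * (d - 1)) * (1 + b) := by
        intro k
        rw [Finset.sum_const, Finset.card_univ, Fintype.card_fin, smul_eq_mul]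
        ring
      rw [Finset.sum_congr rfl (fun k _ => hstep k), ← Finset.sum_mul]
      have hre : ∑ i : Fin a, d ^ (a - 1 - (i : ℕ)) * (d - 1) = d ^ a - 1 := by
        rw [Fin.sum_univ_eq_sum_range (fun i => d ^ (a - 1 - i) * (d - 1)) a]
        rw [Finset.sum_range_reflect (fun i => d ^ i * (d - 1)) a]
        rw [← Finset.sum_mul, geom_nat d (by omega) a]
      rw [hre, mul_comm]
    have hfinal : L ≤ (1 + b) * (d ^ a - 1) + b := by
      rw [← hsuminl]; omega
    have e1 : (1 + b) * (d ^ a - 1) = L - (1 + b) := by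
      rw [Nat.mul_sub, mul_one, mul_comm, ← hL]
    have e3 : 1 + b ≤ L := by
      rw [hL]; exact Nat.le_mul_of_pos_left _ hda
    omega
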